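/- Stubborn Real Roots Theorem: let P and Q be real polynomials of degrees n and m respectively with n > m, both splitting over ℝ (all roots purely real), and suppose |P(0)| > |Q(0)|. Let |p₁| ≤ |p₂| ≤ ... ≤ |p_n| and |q₁| ≤ ... ≤ |q_m| be the roots of P and Q (with multiplicity) ordered by absolute value, and suppose |p_j| < |q_j| for every j = 1, ..., m. Then the number of roots (with multiplicity) of S = P + Q with strictly negative real part equals the number of roots of P with strictly negative real part, and likewise the number of roots of S with strictly positive real part equals the number of roots of P with strictly positive real part. -/

import Mathlib

open Polynomial Finset NNReal

section StubbornAux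


lemma prod_ineq (n m : ℕ) (hnm : m < n) (c : ℝ) (p : Fin n → ℝ) (q : Fin m → ℝ)
    (hc : 0 ≤ c)
    (hpq : ∀ j : Fin m, (p (Fin.castLE hnm.le j))^2 ≤ (q j)^2) :
    (∏ j, (c + (q j)^2)) * ∏ i, (p i)^2 ≤ (∏ j, (q j)^2) * ∏ i, (c + (p i)^2) := by
  classical
  set pp : ℕ → ℝ := fun i => if h : i < n then p ⟨i, h⟩ else 1 with hpp
  set qq : ℕ → ℝ := fun j => if h : j < m then q ⟨j, h⟩ else 1 with hqq
  have hp1 : ∀ g : ℝ → ℝ, (∏ i : Fin n, g (p i)) = ∏ i ∈ range n, g (pp i) := by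
    intro g
    rw [← Fin.prod_univ_eq_prod_range (fun i => g (pp i)) n]
    exact Finset.prod_congr rfl fun i _ => by simp [hpp, i.isLt]
  have hq1 : ∀ g : ℝ → ℝ, (∏ j : Fin m, g (q j)) = ∏ j ∈ range m, g (qq j) := by
    intro g
    rw [← Fin.prod_univ_eq_prod_range (fun j => g (qq j)) m]
    exact Finset.prod_congr rfl fun j _ => by simp [hqq, j.isLt]
  rw [hp1 (fun x => x^2), hp1 (fun x => c + x^2), hq1 (fun x => x^2), hq1 (fun x => c + x^2)]
  rw [← Finset.prod_range_mul_prod_Ico (fun i => (pp i)^2) hnm.le,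
      ← Finset.prod_range_mul_prod_Ico (fun i => c + (pp i)^2) hnm.le]
  have key : ∀ j ∈ range m, (c + (qq j)^2) * (pp j)^2 ≤ (qq j)^2 * (c + (pp j)^2) := by
    intro j hj
    rw [mem_range] at hj
    have h2 := hpq ⟨j, hj⟩
    have : pp j = p (Fin.castLE hnm.le ⟨j, hj⟩) := by simp [hpp, hj.trans hnm]
    rw [this]
    have : qq j = q ⟨j, hj⟩ := by simp [hqq, hj]
    rw [this]
    nlinarith [sq_nonneg (p (Fin.castLE hnm.le ⟨j, hj⟩)), sq_nonneg (q ⟨j, hj⟩)]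
  calc (∏ j ∈ range m, (c + (qq j)^2)) * ((∏ i ∈ range m, (pp i)^2) * ∏ i ∈ Ico m n, (pp i)^2)
      = (∏ j ∈ range m, (c + (qq j)^2) * (pp j)^2) * ∏ i ∈ Ico m n, (pp i)^2 := by
        rw [Finset.prod_mul_distrib]; ring
    _ ≤ (∏ j ∈ range m, (qq j)^2 * (c + (pp j)^2)) * ∏ i ∈ Ico m n, (c + (pp i)^2) := by
        apply mul_le_mul
        · exact Finset.prod_le_prod (fun j hj => by positivity) key
        · exact Finset.prod_le_prod (fun i _ => by positivity) (fun i _ => by nlinarith [sq_nonneg (pp i)])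
        · exact Finset.prod_nonneg (fun i _ => by positivity)
        · exact Finset.prod_nonneg (fun j hj => by positivity)
    _ = (∏ j ∈ range m, (qq j)^2) * ((∏ i ∈ range m, (c + (pp i)^2)) * ∏ i ∈ Ico m n, (c + (pp i)^2)) := by
        rw [Finset.prod_mul_distrib]; ring

lemma norm_eval_sq (n : ℕ) (P : ℝ[X]) (p : Fin n → ℝ)
    (hsplit : (P.map (RingHom.id ℝ)).Splits) (hroots : P.roots = ↑(List.ofFn p)) (y : ℝ) :
    ‖(P.map (algebraMap ℝ ℂ)).eval (↑y * Complex.I)‖^2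
      = P.leadingCoeff^2 * ∏ i, (y^2 + (p i)^2) := by
  have hP := Splits.eq_prod_roots (by simpa using hsplit)
  rw [hroots] at hP
  have heval : (P.map (algebraMap ℝ ℂ)).eval (↑y * Complex.I)
      = (algebraMap ℝ ℂ P.leadingCoeff) * ∏ i, (↑y * Complex.I - ↑(p i)) := by
    conv_lhs => rw [hP]
    rw [Polynomial.map_mul, Polynomial.map_C, Polynomial.map_multiset_prod,
      eval_mul, eval_C, eval_multiset_prod]
    congr 1
    rw [Multiset.map_coe, Multiset.map_coe, Multiset.map_coe, List.map_ofFn, List.map_ofFn,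
      List.map_ofFn, Multiset.prod_coe, List.prod_ofFn]
    apply Finset.prod_congr rfl
    intro i _
    simp [Function.comp]
  rw [heval, norm_mul, mul_pow, norm_prod]
  congr 1
  · simp [Complex.norm_real, sq_abs]
  · rw [← Finset.prod_pow]
    apply Finset.prod_congr rfl
    intro i _
    rw [← Complex.normSq_eq_norm_sq]
    simp [Complex.normSq_apply]
    ring

lemma key_lt (n m : ℕ) (hnm : m < n) (P Q : ℝ[X])
    (hPsplit : (P.map (RingHom.id ℝ)).Splits) (hQsplit : (Q.map (RingHom.id ℝ)).Splits)
    (h0 : |Q.eval 0| < |P.eval 0|)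
    (p : Fin n → ℝ) (q : Fin m → ℝ)
    (hproots : P.roots = ↑(List.ofFn p)) (hqroots : Q.roots = ↑(List.ofFn q))
    (hlt : ∀ j : Fin m, |p (Fin.castLE hnm.le j)| < |q j|) (y : ℝ) :
    ‖(Q.map (algebraMap ℝ ℂ)).eval (↑y * Complex.I)‖
      < ‖(P.map (algebraMap ℝ ℂ)).eval (↑y * Complex.I)‖ := by
  have habs : ∀ (R : ℝ[X]), ‖(R.map (algebraMap ℝ ℂ)).eval ((0:ℝ) * Complex.I)‖ = |R.eval 0| := by
    intro R
    rw [Complex.ofReal_zero, zero_mul, eval_map, eval₂_at_zero, coeff_zero_eq_eval_zero]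
    exact Complex.norm_real _
  -- squared at 0
  have h0sq : Q.leadingCoeff^2 * ∏ j, (q j)^2 < P.leadingCoeff^2 * ∏ i, (p i)^2 := by
    have e1 := norm_eval_sq n P p hPsplit hproots 0
    have e2 := norm_eval_sq m Q q hQsplit hqroots 0
    rw [habs P] at e1; rw [habs Q] at e2
    simp only [ne_eq, OfNat.ofNat_ne_zero, not_false_eq_true, zero_pow, zero_add] at e1 e2
    rw [← e1, ← e2]
    exact pow_lt_pow_left₀ h0 (abs_nonneg _) two_ne_zero
  have hq2pos : (0:ℝ) < ∏ j, (q j)^2 := by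
    apply Finset.prod_pos
    intro j _
    have := hlt j
    have hq0 : q j ≠ 0 := by
      intro h
      rw [h, abs_zero] at this
      exact absurd this (abs_nonneg _).not_gt
    positivity
  have hyy : (0:ℝ) ≤ y^2 := sq_nonneg y
  have hpq : ∀ j : Fin m, (p (Fin.castLE hnm.le j))^2 ≤ (q j)^2 := by
    intro j
    have := hlt j
    nlinarith [abs_nonneg (p (Fin.castLE hnm.le j)), abs_nonneg (q j),
      sq_abs (p (Fin.castLE hnm.le j)), sq_abs (q j)]
  have hkey : Q.leadingCoeff^2 * ∏ j, (y^2 + (q j)^2) < P.leadingCoeff^2 * ∏ i, (y^2 + (p i)^2) := by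
    have hmul : (Q.leadingCoeff^2 * ∏ j, (y^2 + (q j)^2)) * ∏ j, (q j)^2
        < (P.leadingCoeff^2 * ∏ i, (y^2 + (p i)^2)) * ∏ j, (q j)^2 := by
      calc (Q.leadingCoeff^2 * ∏ j, (y^2 + (q j)^2)) * ∏ j, (q j)^2
          = (Q.leadingCoeff^2 * ∏ j, (q j)^2) * ∏ j, (y^2 + (q j)^2) := by ring
        _ < (P.leadingCoeff^2 * ∏ i, (p i)^2) * ∏ j, (y^2 + (q j)^2) := by
            apply mul_lt_mul_of_pos_right h0sq
            apply Finset.prod_pos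
            intro j _
            have := hlt j
            have hq0 : q j ≠ 0 := by
              intro h
              rw [h, abs_zero] at this
              exact absurd this (abs_nonneg _).not_gt
            positivity
        _ = ((∏ j, (y^2 + (q j)^2)) * ∏ i, (p i)^2) * P.leadingCoeff^2 := by ring
        _ ≤ ((∏ j, (q j)^2) * ∏ i, (y^2 + (p i)^2)) * P.leadingCoeff^2 := by
            apply mul_le_mul_of_nonneg_right (prod_ineq n m hnm (y^2) p q hyy hpq) (sq_nonneg _)
        _ = (P.leadingCoeff^2 * ∏ i, (y^2 + (p i)^2)) * ∏ j, (q j)^2 := by ring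
    exact lt_of_mul_lt_mul_right hmul hq2pos.le
  have eP := norm_eval_sq n P p hPsplit hproots y
  have eQ := norm_eval_sq m Q q hQsplit hqroots y
  apply lt_of_pow_lt_pow_left₀ 2 (norm_nonneg _)
  rw [eP, eQ]
  exact hkey

lemma homotopy_count (n : ℕ) (pC qC : ℂ[X]) (ha : pC.leadingCoeff ≠ 0)
    (hdeg : pC.natDegree = n)
    (hqd : qC.degree < pC.degree)
    (hkey : ∀ t ∈ Set.Icc (0:ℝ) 1, ∀ z : ℂ, z.re = 0 → (pC + C (t:ℂ) * qC).eval z ≠ 0)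
    (R : ℝ) (hR : ∀ t ∈ Set.Icc (0:ℝ) 1, ∀ z : ℂ, (pC + C (t:ℂ) * qC).eval z = 0 → ‖z‖ ≤ R)
    (pred : ℂ → Prop) [DecidablePred pred]
    (hpred : ∀ z : ℂ, z.re ≠ 0 → ∀ᶠ w in nhds z, (pred w ↔ pred z)) :
    Multiset.card (((pC + qC).roots).filter pred)
      = Multiset.card ((pC.roots).filter pred) := by
  classical
  set a := pC.leadingCoeff with haa
  set S : ℝ → ℂ[X] := fun t => pC + C (t:ℂ) * qC with hSdef
  have hSd : ∀ t : ℝ, degree (C (t:ℂ) * qC) < degree pC := by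
    intro t
    refine lt_of_le_of_lt ?_ hqd
    calc degree (C (t:ℂ) * qC) ≤ degree (C (t:ℂ)) + degree qC := degree_mul_le _ _
      _ ≤ 0 + degree qC := add_le_add degree_C_le le_rfl
      _ = degree qC := zero_add _
  have hSlead : ∀ t : ℝ, (S t).leadingCoeff = a :=
    fun t => leadingCoeff_add_of_degree_lt' (hSd t)
  have hS0 : ∀ t : ℝ, S t ≠ 0 := fun t h => ha (by rw [← hSlead t, h, leadingCoeff_zero])
  have hSdeg : ∀ t : ℝ, (S t).natDegree = n := by
    intro t
    rw [← hdeg]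
    exact natDegree_eq_of_degree_eq (degree_add_eq_left_of_degree_lt (hSd t))
  have hcard : ∀ t : ℝ, Multiset.card (S t).roots = n := by
    intro t
    rw [← hSdeg t]
    exact splits_iff_card_roots.mp (IsAlgClosed.splits (S t))
  set f : ℝ → ℕ := fun t => Multiset.card (((S t).roots).filter pred) with hfdef
  -- local constancy
  have hloc : ∀ t₀ ∈ Set.Icc (0:ℝ) 1, ∀ᶠ t in nhdsWithin t₀ (Set.Icc 0 1), f t = f t₀ := by
    intro t₀ ht₀
    by_contra hcon
    have hfreq : ∃ᶠ t in nhdsWithin t₀ (Set.Icc 0 1),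
        (t ∈ Set.Icc (0:ℝ) 1 ∧ ¬ f t = f t₀) :=
      eventually_mem_nhdsWithin.and_frequently (Filter.not_eventually.mp hcon)
    obtain ⟨u, hut, hu⟩ := Filter.exists_seq_forall_of_frequently hfreq
    have humem : ∀ k, u k ∈ Set.Icc (0:ℝ) 1 := fun k => (hu k).1
    have hune : ∀ k, f (u k) ≠ f t₀ := fun k => (hu k).2
    have hut' : Filter.Tendsto u Filter.atTop (nhds t₀) := hut.mono_right nhdsWithin_le_nhds
    have hlen : ∀ k, ((S (u k)).roots.toList).length = n := fun k => by
      rw [Multiset.length_toList, hcard]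
    set r : ℕ → Fin n → ℂ :=
      fun k i => ((S (u k)).roots.toList).get (Fin.cast (hlen k).symm i) with hrdef
    have hofFn : ∀ k, (S (u k)).roots = ↑(List.ofFn (r k)) := by
      intro k
      have : List.ofFn (r k) = (S (u k)).roots.toList := by
        apply List.ext_getElem (by simp [hlen])
        intro i h1 h2
        simp [hrdef]
      rw [this, Multiset.coe_toList]
    have hrootmem : ∀ k i, (r k i) ∈ (S (u k)).roots := by
      intro k i
      rw [hofFn k]
      exact Multiset.mem_coe.mpr (List.mem_ofFn.mpr ⟨i, rfl⟩)
    have hrmem : ∀ k, r k ∈ Set.univ.pi fun _ : Fin n => Metric.closedBall (0:ℂ) R := by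
      intro k
      rw [Set.mem_univ_pi]
      intro i
      rw [Metric.mem_closedBall, dist_zero_right]
      apply hR (u k) (humem k)
      exact ((mem_roots (hS0 (u k))).mp (hrootmem k i))
    have hcpt : IsCompact (Set.univ.pi fun _ : Fin n => Metric.closedBall (0:ℂ) R) :=
      isCompact_univ_pi fun _ => isCompact_closedBall _ _
    obtain ⟨rl, -, φ, hφ, hconv⟩ := hcpt.tendsto_subseq hrmem
    have hconv' : ∀ i, Filter.Tendsto (fun k => r (φ k) i) Filter.atTop (nhds (rl i)) :=
      fun i => tendsto_pi_nhds.mp hconv i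
    have huφ : Filter.Tendsto (fun k => u (φ k)) Filter.atTop (nhds t₀) :=
      hut'.comp hφ.tendsto_atTop
    have heval : ∀ k (z : ℂ), (S (u k)).eval z = a * ∏ i, (z - r k i) := by
      intro k z
      have h1 := (IsAlgClosed.splits (S (u k))).eq_prod_roots
      rw [hSlead, hofFn k] at h1
      conv_lhs => rw [h1]
      rw [eval_mul, eval_C, eval_multiset_prod]
      congr 1
      rw [Multiset.map_coe, Multiset.map_coe, List.map_ofFn, List.map_ofFn,
        Multiset.prod_coe, List.prod_ofFn]
      exact Finset.prod_congr rfl fun i _ => by simp [Function.comp]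
    have heval₀ : ∀ z : ℂ, (S t₀).eval z = a * ∏ i, (z - rl i) := by
      intro z
      have h1 : Filter.Tendsto (fun k => (S (u (φ k))).eval z) Filter.atTop
          (nhds ((S t₀).eval z)) := by
        simp only [hSdef, eval_add, eval_mul, eval_C]
        exact Filter.Tendsto.add tendsto_const_nhds
          (Filter.Tendsto.mul
            ((Complex.continuous_ofReal.tendsto t₀).comp huφ) tendsto_const_nhds)
      have h2 : Filter.Tendsto (fun k => a * ∏ i, (z - r (φ k) i)) Filter.atTop
          (nhds (a * ∏ i, (z - rl i))) := by
        apply Filter.Tendsto.const_mul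
        apply tendsto_finset_prod
        intro i _
        exact tendsto_const_nhds.sub (hconv' i)
      have h3 : (fun k => (S (u (φ k))).eval z) = fun k => a * ∏ i, (z - r (φ k) i) :=
        funext fun k => heval (φ k) z
      rw [h3] at h1
      exact tendsto_nhds_unique h1 h2
    have hpoly : S t₀ = C a * ((Finset.univ.val.map rl).map fun w => X - C w).prod := by
      apply Polynomial.funext
      intro z
      rw [heval₀ z, eval_mul, eval_C, eval_multiset_prod, Multiset.map_map,
        Multiset.map_map]
      congr 1
      rw [Finset.prod_eq_multiset_prod]
      exact Finset.prod_congr rfl fun i _ => by simp [Function.comp]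
    have hroots₀ : (S t₀).roots = Finset.univ.val.map rl := by
      rw [hpoly, roots_C_mul _ ha, roots_multiset_prod_X_sub_C]
    have hre : ∀ i, (rl i).re ≠ 0 := by
      intro i h
      apply hkey t₀ ht₀ (rl i) h
      have hmem : rl i ∈ (S t₀).roots := by
        rw [hroots₀]
        exact Multiset.mem_map.mpr ⟨i, Finset.mem_val.mpr (Finset.mem_univ i), rfl⟩
      exact (mem_roots (hS0 t₀)).mp hmem
    have hsgn : ∀ᶠ k in Filter.atTop, ∀ i, (pred (r (φ k) i) ↔ pred (rl i)) := by
      rw [Filter.eventually_all]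
      intro i
      exact (hconv' i).eventually (hpred (rl i) (hre i))
    obtain ⟨k, hk⟩ := hsgn.exists
    apply hune (φ k)
    have e1 : f (u (φ k)) = Multiset.countP (fun i => pred (r (φ k) i)) Finset.univ.val := by
      show Multiset.card (((S (u (φ k))).roots).filter pred) = _
      rw [hofFn, ← Fin.univ_val_map, ← Multiset.countP_eq_card_filter, Multiset.countP_map,
        Multiset.countP_eq_card_filter]
    have e2 : f t₀ = Multiset.countP (fun i => pred (rl i)) Finset.univ.val := by
      show Multiset.card (((S t₀).roots).filter pred) = _
      rw [hroots₀, ← Multiset.countP_eq_card_filter, Multiset.countP_map,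
        Multiset.countP_eq_card_filter]
    rw [e1, e2, Multiset.countP_eq_card_filter, Multiset.countP_eq_card_filter]
    congr 1
    exact Multiset.filter_congr fun i _ => hk i
  -- locally constant ⇒ constant on Icc
  haveI : PreconnectedSpace (Set.Icc (0:ℝ) 1) := Subtype.preconnectedSpace isPreconnected_Icc
  set g : Set.Icc (0:ℝ) 1 → ℕ := fun x => f x.val with hgdef
  have hlc : IsLocallyConstant g := by
    rw [IsLocallyConstant.iff_eventually_eq]
    intro x
    have h1 := hloc x.val x.2
    have h2 : Filter.map Subtype.val (nhds x) = nhdsWithin x.val (Set.Icc (0:ℝ) 1) :=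
      map_nhds_subtype_val x
    rw [← h2] at h1
    exact Filter.eventually_map.mp h1
  have hconst := hlc.apply_eq_of_preconnectedSpace
    (⟨1, by norm_num⟩ : Set.Icc (0:ℝ) 1) (⟨0, by norm_num⟩ : Set.Icc (0:ℝ) 1)
  have hg1 : f 1 = f 0 := hconst
  have hf1 : f 1 = Multiset.card (((pC + qC).roots).filter pred) := by
    simp only [hfdef, hSdef, Complex.ofReal_one, map_one, one_mul]
  have hf0 : f 0 = Multiset.card ((pC.roots).filter pred) := by
    simp only [hfdef, hSdef, Complex.ofReal_zero, map_zero, zero_mul, add_zero]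
  rw [← hf1, ← hf0, hg1]

lemma root_bound (pC qC : ℂ[X]) (ha : pC.leadingCoeff ≠ 0) (hqd : qC.degree < pC.degree) :
    ∃ R : ℝ, ∀ t ∈ Set.Icc (0:ℝ) 1, ∀ z : ℂ, (pC + C (t:ℂ) * qC).eval z = 0 → ‖z‖ ≤ R := by
  refine ⟨(((Finset.range pC.natDegree).sup
      (fun i => ‖pC.coeff i‖₊ + ‖qC.coeff i‖₊)) / ‖pC.leadingCoeff‖₊ + 1 : ℝ≥0), ?_⟩
  intro t ht z hz
  have hSd : degree (C (t:ℂ) * qC) < degree pC := by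
    refine lt_of_le_of_lt ?_ hqd
    calc degree (C (t:ℂ) * qC) ≤ degree (C (t:ℂ)) + degree qC := degree_mul_le _ _
      _ ≤ 0 + degree qC := add_le_add degree_C_le le_rfl
      _ = degree qC := zero_add _
  have hSlead : (pC + C (t:ℂ) * qC).leadingCoeff = pC.leadingCoeff :=
    leadingCoeff_add_of_degree_lt' hSd
  have hS0 : pC + C (t:ℂ) * qC ≠ 0 := fun h => ha (by rw [← hSlead, h, leadingCoeff_zero])
  have hSdeg : (pC + C (t:ℂ) * qC).natDegree = pC.natDegree :=
    natDegree_eq_of_degree_eq (degree_add_eq_left_of_degree_lt hSd)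
  have hroot : ‖z‖₊ < cauchyBound (pC + C (t:ℂ) * qC) :=
    Polynomial.IsRoot.norm_lt_cauchyBound hS0 hz
  have hbound : cauchyBound (pC + C (t:ℂ) * qC)
      ≤ ((Finset.range pC.natDegree).sup
        (fun i => ‖pC.coeff i‖₊ + ‖qC.coeff i‖₊)) / ‖pC.leadingCoeff‖₊ + 1 := by
    rw [cauchyBound, hSlead, hSdeg]
    gcongr
    rename_i i hi
    rw [coeff_add, coeff_C_mul]
    refine (nnnorm_add_le _ _).trans ?_
    gcongr
    rw [nnnorm_mul]
    apply mul_le_of_le_one_left zero_le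
    rw [Complex.nnnorm_real, ← NNReal.coe_le_coe, coe_nnnorm, Real.norm_eq_abs, NNReal.coe_one]
    rw [abs_le]
    constructor <;> [linarith [ht.1]; exact ht.2]
  calc ‖z‖ = (‖z‖₊ : ℝ) := (coe_nnnorm z).symm
    _ ≤ _ := by exact_mod_cast (hroot.le.trans hbound)


lemma pred_lt_eventually (z : ℂ) (hz : z.re ≠ 0) :
    ∀ᶠ w in nhds z, ((w.re < 0) ↔ (z.re < 0)) := by
  rcases lt_or_gt_of_ne hz with h | h
  · filter_upwards [(isOpen_lt Complex.continuous_re continuous_const).mem_nhds h] with w hw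
    exact iff_of_true hw h
  · filter_upwards [(isOpen_lt continuous_const Complex.continuous_re).mem_nhds h] with w hw
    exact iff_of_false (not_lt_of_gt hw) (not_lt_of_gt h)

lemma pred_gt_eventually (z : ℂ) (hz : z.re ≠ 0) :
    ∀ᶠ w in nhds z, ((0 < w.re) ↔ (0 < z.re)) := by
  rcases lt_or_gt_of_ne hz with h | h
  · filter_upwards [(isOpen_lt Complex.continuous_re continuous_const).mem_nhds h] with w hw
    exact iff_of_false (not_lt_of_gt hw) (not_lt_of_gt h)
  · filter_upwards [(isOpen_lt continuous_const Complex.continuous_re).mem_nhds h] with w hw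
    exact iff_of_true hw h

end StubbornAux

theorem stubborn_real_roots (n m : ℕ) (hnm : m < n) (P Q : Polynomial ℝ)
    (hP0 : P ≠ 0) (hQ0 : Q ≠ 0) (hPdeg : P.natDegree = n) (hQdeg : Q.natDegree = m)
    (hPsplit : (P.map (RingHom.id ℝ)).Splits) (hQsplit : (Q.map (RingHom.id ℝ)).Splits)
    (h0 : |Q.eval 0| < |P.eval 0|)
    (p : Fin n → ℝ) (q : Fin m → ℝ)
    (hproots : P.roots = ↑(List.ofFn p)) (hqroots : Q.roots = ↑(List.ofFn q))
    (hpmono : ∀ i j : Fin n, i ≤ j → |p i| ≤ |p j|)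
    (hqmono : ∀ i j : Fin m, i ≤ j → |q i| ≤ |q j|)
    (hlt : ∀ j : Fin m, |p (Fin.castLE hnm.le j)| < |q j|) :
    (Multiset.card
        ((((P + Q).map (algebraMap ℝ ℂ)).roots).filter fun z => z.re < 0) =
      Multiset.card (((P.map (algebraMap ℝ ℂ)).roots).filter fun z => z.re < 0)) ∧
    (Multiset.card
        ((((P + Q).map (algebraMap ℝ ℂ)).roots).filter fun z => 0 < z.re) =
      Multiset.card (((P.map (algebraMap ℝ ℂ)).roots).filter fun z => 0 < z.re)) := by
  have hinj : Function.Injective (algebraMap ℝ ℂ) := (algebraMap ℝ ℂ).injective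
  set pC := P.map (algebraMap ℝ ℂ) with hpCdef
  set qC := Q.map (algebraMap ℝ ℂ) with hqCdef
  have hpC0 : pC ≠ 0 := (Polynomial.map_ne_zero_iff hinj).mpr hP0
  have hlead : pC.leadingCoeff ≠ 0 := leadingCoeff_ne_zero.mpr hpC0
  have hdegC : pC.natDegree = n := by
    rw [hpCdef, natDegree_map_eq_of_injective hinj, hPdeg]
  have hqd : qC.degree < pC.degree := by
    rw [hpCdef, hqCdef, degree_map_eq_of_injective hinj, degree_map_eq_of_injective hinj,
      degree_eq_natDegree hP0, degree_eq_natDegree hQ0, hPdeg, hQdeg]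
    exact_mod_cast hnm
  have hkeyC : ∀ t ∈ Set.Icc (0:ℝ) 1, ∀ z : ℂ, z.re = 0 → (pC + C (t:ℂ) * qC).eval z ≠ 0 := by
    intro t ht z hzre hz
    have hzeq : z = ↑(z.im) * Complex.I := by
      apply Complex.ext <;> simp [hzre]
    rw [eval_add, eval_mul, eval_C] at hz
    have h1 : eval z pC = -((t:ℂ) * eval z qC) := eq_neg_of_add_eq_zero_left hz
    have h2 : ‖eval z pC‖ = |t| * ‖eval z qC‖ := by
      rw [h1, norm_neg, norm_mul, Complex.norm_real, Real.norm_eq_abs]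
    have h3 : ‖eval z qC‖ < ‖eval z pC‖ := by
      rw [hzeq]
      exact key_lt n m hnm P Q hPsplit hQsplit h0 p q hproots hqroots hlt z.im
    have h4 : |t| * ‖eval z qC‖ ≤ ‖eval z qC‖ := by
      apply mul_le_of_le_one_left (norm_nonneg _)
      rw [abs_le]
      exact ⟨by linarith [ht.1], ht.2⟩
    rw [h2] at h3
    nlinarith [abs_nonneg t, norm_nonneg (eval z qC)]
  obtain ⟨R, hR⟩ := root_bound pC qC hlead hqd
  have hmapadd : (P + Q).map (algebraMap ℝ ℂ) = pC + qC := Polynomial.map_add _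
  constructor
  · rw [hmapadd]
    exact homotopy_count n pC qC hlead hdegC hqd hkeyC R hR
      (fun z => z.re < 0) pred_lt_eventually
  · rw [hmapadd]
    exact homotopy_count n pC qC hlead hdegC hqd hkeyC R hR
      (fun z => 0 < z.re) pred_gt_eventually
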